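/- Let C be a shortest even hole of a graph G that is good in G, and let u, v be vertices of C with 2 ≤ d_C(u,v) and d_C(u,v) < ‖C‖/4. Then d_G(u,v) = d_C(u,v). -/

import Mathlib

open SimpleGraph

variable {V : Type*}

/-- The vertex set of a walk. -/
def suppSet {G : SimpleGraph V} {u v : V} (w : G.Walk u v) : Set V :=
  {x | x ∈ w.support}

/-- An induced cycle of `G`. -/
def IsInducedCycle (G : SimpleGraph V) {r : V} (w : G.Walk r r) : Prop :=
  w.IsCycle ∧ ∀ a b : V, a ∈ w.support → b ∈ w.support → G.Adj a b → s(a, b) ∈ w.edges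

/-- A hole of `G`: an induced cycle with at least 4 vertices. -/
def IsHole (G : SimpleGraph V) {r : V} (w : G.Walk r r) : Prop :=
  IsInducedCycle G w ∧ 4 ≤ w.length

/-- An even hole of `G`. -/
def IsEvenHole (G : SimpleGraph V) {r : V} (w : G.Walk r r) : Prop :=
  IsHole G w ∧ Even w.length

/-- A shortest even hole of `G`. -/
def IsShortestEvenHole (G : SimpleGraph V) {r : V} (w : G.Walk r r) : Prop :=
  IsEvenHole G w ∧ ∀ (y : V) (w' : G.Walk y y), IsEvenHole G w' → w.length ≤ w'.length

/-- `P` is a path of `G` all of whose edges lie on the walk `c`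
(used for "a `uv`-path of `C`"). -/
def IsPathOf (G : SimpleGraph V) {p q u v : V} (c : G.Walk p q) (P : G.Walk u v) : Prop :=
  P.IsPath ∧ ∀ e ∈ P.edges, e ∈ c.edges

/-- The distance `d_C(u,v)` between `u` and `v` within the cycle `c`. -/
noncomputable def cycleDist (G : SimpleGraph V) {r : V} (c : G.Walk r r) (u v : V) : ℕ :=
  sInf {n | ∃ P : G.Walk u v, IsPathOf G c P ∧ P.length = n}

/-- The induced subgraph `G[S]` is a hole of `G`. -/
def IsHoleOn (G : SimpleGraph V) (S : Set V) : Prop :=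
  ∃ (r : V) (w : G.Walk r r), IsHole G w ∧ suppSet w = S

/-- The induced subgraph `G[S]` is an even hole of `G`. -/
def IsEvenHoleOn (G : SimpleGraph V) (S : Set V) : Prop :=
  ∃ (r : V) (w : G.Walk r r), IsEvenHole G w ∧ suppSet w = S

/-- The induced subgraph `G[S]` is a shortest even hole of `G`. -/
def IsShortestEvenHoleOn (G : SimpleGraph V) (S : Set V) : Prop :=
  ∃ (r : V) (w : G.Walk r r), IsShortestEvenHole G w ∧ suppSet w = S

/-- `P` is `C`-good: the union of `P` and one of the two `uv`-paths of `C`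
is again a shortest even hole of `G`. -/
def CGood (G : SimpleGraph V) {r u v : V} (c : G.Walk r r) (P : G.Walk u v) : Prop :=
  ∃ Q : G.Walk u v, IsPathOf G c Q ∧ IsShortestEvenHoleOn G (suppSet P ∪ suppSet Q)

/-- The standing assumptions for `C`-shortcuts: `P` is a `uv`-path of `G` for distinct
nonadjacent vertices `u`, `v` of `C`. -/
def ShortcutSetup (G : SimpleGraph V) {r u v : V} (c : G.Walk r r) (P : G.Walk u v) : Prop :=
  P.IsPath ∧ u ≠ v ∧ ¬G.Adj u v ∧ u ∈ c.support ∧ v ∈ c.support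

/-- `P` is a `C`-shortcut: `2 ≤ ‖P‖ ≤ d_C(u,v)` and `‖P‖ < ‖C‖/4`. -/
def CShortcut (G : SimpleGraph V) {r u v : V} (c : G.Walk r r) (P : G.Walk u v) : Prop :=
  2 ≤ P.length ∧ P.length ≤ cycleDist G c u v ∧ 4 * P.length < c.length

/-- `C1` and `C2` are the two `uv`-paths of the cycle `c`. -/
def ArcPair (G : SimpleGraph V) {r u v : V} (c : G.Walk r r) (C1 C2 : G.Walk u v) : Prop :=
  IsPathOf G c C1 ∧ IsPathOf G c C2 ∧ C1.length + C2.length = c.length ∧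
    ∀ e ∈ c.edges, e ∈ C1.edges ∨ e ∈ C2.edges

/-- `P` is `C`-shallow: `‖P‖ ≥ d_C(u,v) − 1` and `G[P ∪ C2]` is a hole, where `C2` is the
longer of the two `uv`-paths of `C`. -/
def CShallow (G : SimpleGraph V) {r u v : V} (c : G.Walk r r) (P : G.Walk u v) : Prop :=
  cycleDist G c u v - 1 ≤ P.length ∧
    ∀ C1 C2 : G.Walk u v, ArcPair G c C1 C2 → C1.length ≤ C2.length →
      IsHoleOn G (suppSet P ∪ suppSet C2)

/-- `P` is a worst `C`-shortcut. -/
def WorstCShortcut (G : SimpleGraph V) {r u v : V} (c : G.Walk r r) (P : G.Walk u v) : Prop :=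
  ShortcutSetup G c P ∧ CShortcut G c P ∧ ¬CGood G c P ∧
    ∀ (u' v' : V) (P' : G.Walk u' v'),
      ShortcutSetup G c P' → CShortcut G c P' → ¬CGood G c P' →
        (P.length < P'.length ∨
          (P.length = P'.length ∧ cycleDist G c u' v' ≤ cycleDist G c u v))

/-- `C` is good in `G`: every `C`-shortcut is `C`-good. -/
def GoodHole (G : SimpleGraph V) {r : V} (c : G.Walk r r) : Prop :=
  ∀ (u v : V) (P : G.Walk u v), ShortcutSetup G c P → CShortcut G c P → CGood G c P

/-- `P` is a shortest `uv`-path of `G`. -/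
def IsShortestPath (G : SimpleGraph V) {u v : V} (P : G.Walk u v) : Prop :=
  P.IsPath ∧ ∀ Q : G.Walk u v, P.length ≤ Q.length

/-- The closed neighborhood `N_G[S]` of a vertex set `S`. -/
def closedNbhd (G : SimpleGraph V) (S : Set V) : Set V :=
  S ∪ {x | ∃ y ∈ S, G.Adj y x}

/-- The subgraph of `G` induced on `S` (kept on the same vertex type: edges of `G`
with both ends in `S`). -/
def restrictTo (G : SimpleGraph V) (S : Set V) : SimpleGraph V where
  Adj a b := G.Adj a b ∧ a ∈ S ∧ b ∈ S
  symm := ⟨fun a b h => ⟨h.1.symm, h.2.2, h.2.1⟩⟩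
  loopless := ⟨fun a h => G.loopless.irrefl a h.1⟩

/-- The vertex set of `H(u,v,x,y) = G[(V(G) \ N_G[V(P_uv ∪ P_xy) \ {u,v}]) ∪ {u,v}]`. -/
def Hverts (G : SimpleGraph V) {u v a b : V} (Puv : G.Walk u v) (Pxy : G.Walk a b) : Set V :=
  (Set.univ \ closedNbhd G ((suppSet Puv ∪ suppSet Pxy) \ {u, v})) ∪ {u, v}

/-- The graph `H(u,v,x,y)`. -/
def Hgraph (G : SimpleGraph V) {u v a b : V} (Puv : G.Walk u v) (Pxy : G.Walk a b) :
    SimpleGraph V :=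
  restrictTo G (Hverts G Puv Pxy)

/-- `G` is shallow. -/
def ShallowGraph (G : SimpleGraph V) : Prop :=
  ∃ (r : V) (c : G.Walk r r), IsShortestEvenHole G c ∧
    ∀ (u v : V) (P : G.Walk u v), WorstCShortcut G c P → CShallow G c P

/-- `G` is anti-shallow. -/
def AntiShallowGraph (G : SimpleGraph V) : Prop :=
  ∀ (r : V) (c : G.Walk r r), IsShortestEvenHole G c → ¬GoodHole G c →
    ∀ (u v : V) (P : G.Walk u v), WorstCShortcut G c P → ¬CShallow G c P

/-- The induced subgraph `G[S]` is a path with end-vertices `u` and `v`. -/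
def IsInducedPathOn (G : SimpleGraph V) (u v : V) (S : Set V) : Prop :=
  ∃ Q : G.Walk u v, Q.IsPath ∧ suppSet Q = S ∧
    ∀ a b : V, a ∈ S → b ∈ S → G.Adj a b → s(a, b) ∈ Q.edges

section AuxStmt12

open scoped Classical

open SimpleGraph

variable {G : SimpleGraph V}

private lemma pathGetVertInj {u v : V} (p : G.Walk u v) :
    p.IsPath → ∀ i j : ℕ, i ≤ p.length → j ≤ p.length →
      p.getVert i = p.getVert j → i = j := by
  induction p with
  | nil => intro _ i j hi hj _; simp only [Walk.length_nil] at hi hj; omega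
  | @cons a b d h q ih =>
    intro hp i j hi hj hij
    rw [Walk.cons_isPath_iff] at hp
    have hmem : ∀ k : ℕ, k ≤ q.length → q.getVert k ∈ q.support := fun k hk =>
      Walk.mem_support_iff_exists_getVert.mpr ⟨k, rfl, hk⟩
    match i, j with
    | 0, 0 => rfl
    | 0, j + 1 =>
      exfalso
      apply hp.2
      have hx : q.getVert j = a := by
        simpa [Walk.getVert_cons_succ] using hij.symm
      exact hx ▸ hmem j (by simpa [Walk.length_cons] using hj)
    | i + 1, 0 =>
      exfalso
      apply hp.2
      have hx : q.getVert i = a := by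
        simpa [Walk.getVert_cons_succ] using hij
      exact hx ▸ hmem i (by simpa [Walk.length_cons] using hi)
    | i + 1, j + 1 =>
      have := ih hp.1 i j (by simpa [Walk.length_cons] using hi)
        (by simpa [Walk.length_cons] using hj)
        (by simpa [Walk.getVert_cons_succ] using hij)
      omega

private lemma cycleGetVertInj {r : V} (c : G.Walk r r) (hc : c.IsCycle) :
    ∀ i j : ℕ, i < c.length → j < c.length → c.getVert i = c.getVert j → i = j := by
  intro i j hi hj hij
  have hnil : ¬ c.Nil := hc.not_nil
  have htp : c.tail.IsPath := by
    rw [Walk.isPath_def, Walk.support_tail_of_not_nil c hnil]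
    exact hc.support_nodup
  have hlt : c.tail.length + 1 = c.length := Walk.length_tail_add_one hnil
  have hgv : ∀ k : ℕ, c.tail.getVert k = c.getVert (k + 1) := fun k =>
    Walk.getVert_tail c
  have hend : c.tail.getVert c.tail.length = r := Walk.getVert_length _
  match i, j with
  | 0, 0 => rfl
  | 0, j + 1 =>
    exfalso
    have h1 : c.tail.getVert j = r := by
      rw [hgv]
      simpa [Walk.getVert_zero] using hij.symm
    have := pathGetVertInj c.tail htp j c.tail.length (by omega) le_rfl
      (by rw [h1, hend])
    omega
  | i + 1, 0 =>
    exfalso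
    have h1 : c.tail.getVert i = r := by
      rw [hgv]
      simpa [Walk.getVert_zero] using hij
    have := pathGetVertInj c.tail htp i c.tail.length (by omega) le_rfl
      (by rw [h1, hend])
    omega
  | i + 1, j + 1 =>
    have := pathGetVertInj c.tail htp i j (by omega) (by omega)
      (by rw [hgv, hgv]; exact hij)
    omega

private noncomputable def cIdx {r : V} (c : G.Walk r r) (x : V) : ℕ :=
  if h : ∃ i, i < c.length ∧ c.getVert i = x then h.choose else 0

private lemma cIdx_spec {r : V} {c : G.Walk r r} {x : V} (hx : x ∈ c.support)
    (h0 : 0 < c.length) : cIdx c x < c.length ∧ c.getVert (cIdx c x) = x := by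
  obtain ⟨n, hn, hn'⟩ := Walk.mem_support_iff_exists_getVert.mp hx
  have h : ∃ i, i < c.length ∧ c.getVert i = x := by
    rcases Nat.lt_or_ge n c.length with h' | h'
    · exact ⟨n, h', hn⟩
    · have hnn : n = c.length := le_antisymm hn' h'
      have hr : x = r := by rw [← hn, hnn, Walk.getVert_length]
      exact ⟨0, h0, by rw [Walk.getVert_zero, hr]⟩
  rw [cIdx, dif_pos h]
  exact h.choose_spec

private lemma cIdx_unique {r : V} {c : G.Walk r r} (hc : c.IsCycle) {x : V} {i : ℕ}
    (hi : i < c.length) (hgv : c.getVert i = x) : cIdx c x = i := by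
  have hx : x ∈ c.support := Walk.mem_support_iff_exists_getVert.mpr ⟨i, hgv, le_of_lt hi⟩
  obtain ⟨h1, h2⟩ := cIdx_spec hx (by omega)
  exact cycleGetVertInj c hc _ _ h1 hi (by rw [h2, hgv])

private lemma cIdx_castInj {r : V} {c : G.Walk r r} (hc : c.IsCycle) {a b : V}
    (ha : a ∈ c.support) (hb : b ∈ c.support)
    (h : (cIdx c a : ZMod c.length) = (cIdx c b : ZMod c.length)) : a = b := by
  have h0 : 0 < c.length := by have := hc.three_le_length; omega
  obtain ⟨ha1, ha2⟩ := cIdx_spec ha h0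
  obtain ⟨hb1, hb2⟩ := cIdx_spec hb h0
  have hab : cIdx c a = cIdx c b := by
    have := congrArg ZMod.val h
    rwa [ZMod.val_cast_of_lt ha1, ZMod.val_cast_of_lt hb1] at this
  rw [← ha2, ← hb2, hab]

private lemma edge_getVert {p q : V} (w : G.Walk p q) {a b : V}
    (h : s(a, b) ∈ w.edges) :
    ∃ i, i < w.length ∧ ((w.getVert i = a ∧ w.getVert (i + 1) = b) ∨
      (w.getVert i = b ∧ w.getVert (i + 1) = a)) := by
  have hadj : w.toSubgraph.Adj a b :=
    SimpleGraph.Subgraph.mem_edgeSet.mp ((Walk.mem_edges_toSubgraph w).mpr h)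
  obtain ⟨i, hi1, hi2⟩ := (Walk.toSubgraph_adj_iff w).mp hadj
  refine ⟨i, hi2, ?_⟩
  rw [Sym2.eq_iff] at hi1
  tauto

private lemma cIdx_step {r : V} {c : G.Walk r r} (hc : c.IsCycle) {a b : V}
    (h : s(a, b) ∈ c.edges) :
    (cIdx c b : ZMod c.length) = (cIdx c a : ZMod c.length) + 1 ∨
    (cIdx c a : ZMod c.length) = (cIdx c b : ZMod c.length) + 1 := by
  have h3 := hc.three_le_length
  obtain ⟨i, hi, hor⟩ := edge_getVert c h
  have key : ∀ x y : V, c.getVert i = x → c.getVert (i + 1) = y →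
      (cIdx c y : ZMod c.length) = (cIdx c x : ZMod c.length) + 1 := by
    intro x y hx hy
    have hx' : cIdx c x = i := cIdx_unique hc hi hx
    rcases Nat.lt_or_ge (i + 1) c.length with h' | h'
    · have hy' : cIdx c y = i + 1 := cIdx_unique hc h' hy
      rw [hx', hy']
      push_cast
      ring
    · have hii : i + 1 = c.length := by omega
      have hyr : y = r := by rw [← hy, hii, Walk.getVert_length]
      have hy' : cIdx c y = 0 := by
        rw [hyr]
        exact cIdx_unique hc (by omega) (Walk.getVert_zero c)
      rw [hx', hy']
      have hz : ((i + 1 : ℕ) : ZMod c.length) = 0 := by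
        rw [hii, ZMod.natCast_self]
      push_cast at hz ⊢
      exact hz.symm
  rcases hor with ⟨hx, hy⟩ | ⟨hx, hy⟩
  · exact Or.inl (key a b hx hy)
  · exact Or.inr (key b a hx hy)

private lemma getVert_mem_support_of_edges {r u v : V} {c : G.Walk r r} (Q : G.Walk u v)
    (hE : ∀ e ∈ Q.edges, e ∈ c.edges) (hL : 0 < Q.length) :
    ∀ j, j ≤ Q.length → Q.getVert j ∈ c.support := by
  have hQe : ∀ j, j < Q.length → s(Q.getVert j, Q.getVert (j + 1)) ∈ c.edges := by
    intro j hj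
    apply hE
    exact (Walk.mem_edges_toSubgraph Q).mp
      (SimpleGraph.Subgraph.mem_edgeSet.mpr (Walk.toSubgraph_adj_getVert Q hj))
  intro j hj
  rcases Nat.lt_or_ge j Q.length with h' | h'
  · exact Walk.fst_mem_support_of_mem_edges c (hQe j h')
  · have hj' : j = Q.length := le_antisymm hj h'
    have h1 := Walk.snd_mem_support_of_mem_edges c (hQe (Q.length - 1) (by omega))
    have h2 : Q.length - 1 + 1 = j := by omega
    rwa [h2] at h1

private lemma trek {r u v : V} {c : G.Walk r r} (hc : c.IsCycle)
    (Q : G.Walk u v) (hQ : Q.IsPath) (hE : ∀ e ∈ Q.edges, e ∈ c.edges)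
    (hL : 0 < Q.length) :
    ∃ ε : ZMod c.length, (ε = 1 ∨ ε = -1) ∧
      (cIdx c v : ZMod c.length) =
        (cIdx c u : ZMod c.length) + (Q.length : ZMod c.length) * ε := by
  have h3 := hc.three_le_length
  have hQe : ∀ j, j < Q.length → s(Q.getVert j, Q.getVert (j + 1)) ∈ c.edges := by
    intro j hj
    apply hE
    exact (Walk.mem_edges_toSubgraph Q).mp
      (SimpleGraph.Subgraph.mem_edgeSet.mpr (Walk.toSubgraph_adj_getVert Q hj))
  have hmem := getVert_mem_support_of_edges Q hE hL
  set ι : ℕ → ZMod c.length := fun j => (cIdx c (Q.getVert j) : ZMod c.length) with hι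
  have hstep : ∀ j, j < Q.length → ι (j + 1) = ι j + 1 ∨ ι j = ι (j + 1) + 1 :=
    fun j hj => cIdx_step hc (hQe j hj)
  have hconst : ∀ j, j < Q.length → ι (j + 1) - ι j = ι 1 - ι 0 := by
    intro j
    induction j with
    | zero => intro _; rfl
    | succ k ih =>
      intro hj
      have hk : k < Q.length := by omega
      have prev : ι (k + 1) - ι k = ι 1 - ι 0 := ih hk
      have hvne : Q.getVert (k + 2) ≠ Q.getVert k := by
        intro hEq
        have := pathGetVertInj Q hQ (k + 2) k (by omega) (by omega) hEq
        omega
      rcases hstep k hk with hA | hA <;> rcases hstep (k + 1) hj with hB | hB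
      · linear_combination prev + hB - hA
      · exfalso
        apply hvne
        apply cIdx_castInj hc (hmem (k + 2) (by omega)) (hmem k (by omega))
        linear_combination hA - hB
      · exfalso
        apply hvne
        apply cIdx_castInj hc (hmem (k + 2) (by omega)) (hmem k (by omega))
        linear_combination hB - hA
      · linear_combination prev + hA - hB
  have hε : ι 1 - ι 0 = 1 ∨ ι 1 - ι 0 = -1 := by
    rcases hstep 0 hL with h | h
    · left; linear_combination h
    · right; linear_combination -h
  have key : ∀ j, j ≤ Q.length → ι j = ι 0 + (j : ZMod c.length) * (ι 1 - ι 0) := by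
    intro j
    induction j with
    | zero => intro _; push_cast; ring
    | succ k ih =>
      intro hj
      have h1 := hconst k (by omega)
      have h2 := ih (by omega)
      push_cast
      push_cast at h2
      linear_combination h1 + h2
  have hfin := key Q.length le_rfl
  have h0 : ι 0 = (cIdx c u : ZMod c.length) := by
    simp only [hι, Walk.getVert_zero]
  have hLv : ι Q.length = (cIdx c v : ZMod c.length) := by
    simp only [hι, Walk.getVert_length]
  exact ⟨ι 1 - ι 0, hε, by rw [← h0, ← hLv]; exact hfin⟩

private lemma cycle_support_card [DecidableEq V] {r : V} {c : G.Walk r r}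
    (hc : c.IsCycle) : c.support.toFinset.card = c.length := by
  have hnil : ¬ c.Nil := hc.not_nil
  have hrt : r ∈ c.support.tail := by
    rw [← Walk.support_tail_of_not_nil c hnil]
    exact Walk.end_mem_support _
  have h1 : c.support = r :: c.support.tail := Walk.support_eq_cons c
  rw [h1, List.toFinset_cons, Finset.insert_eq_self.mpr (List.mem_toFinset.mpr hrt),
    List.toFinset_card_of_nodup hc.support_nodup]
  have := Walk.length_support c
  rw [h1] at this
  simpa using Nat.succ_injective this

private lemma path_length_lt {r u v : V} {c : G.Walk r r} (hc : c.IsCycle)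
    (Q : G.Walk u v) (hQ : Q.IsPath) (hE : ∀ e ∈ Q.edges, e ∈ c.edges)
    (hL : 0 < Q.length) : Q.length < c.length := by
  classical
  have hmem := getVert_mem_support_of_edges Q hE hL
  have hsub : Q.support.toFinset ⊆ c.support.toFinset := by
    intro x hx
    obtain ⟨j, hj, hj'⟩ := Walk.mem_support_iff_exists_getVert.mp (List.mem_toFinset.mp hx)
    exact List.mem_toFinset.mpr (hj ▸ hmem j hj')
  have h1 : Q.support.toFinset.card = Q.length + 1 := by
    rw [List.toFinset_card_of_nodup hQ.support_nodup, Walk.length_support]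
  have h2 := cycle_support_card hc
  have := Finset.card_le_card hsub
  omega

private lemma two_paths {r u v : V} {c : G.Walk r r} (hc : c.IsCycle) (huv : u ≠ v)
    (Q1 Q2 : G.Walk u v) (h1 : Q1.IsPath) (hE1 : ∀ e ∈ Q1.edges, e ∈ c.edges)
    (h2 : Q2.IsPath) (hE2 : ∀ e ∈ Q2.edges, e ∈ c.edges) :
    Q1.length = Q2.length ∨ Q1.length + Q2.length = c.length := by
  have h3 := hc.three_le_length
  have hL1 : 0 < Q1.length := by
    rcases Nat.eq_zero_or_pos Q1.length with h | h
    · exact absurd (Walk.eq_of_length_eq_zero h) huv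
    · exact h
  have hL2 : 0 < Q2.length := by
    rcases Nat.eq_zero_or_pos Q2.length with h | h
    · exact absurd (Walk.eq_of_length_eq_zero h) huv
    · exact h
  have hlt1 : Q1.length < c.length := path_length_lt hc Q1 h1 hE1 hL1
  have hlt2 : Q2.length < c.length := path_length_lt hc Q2 h2 hE2 hL2
  obtain ⟨ε1, hε1, hf1⟩ := trek hc Q1 h1 hE1 hL1
  obtain ⟨ε2, hε2, hf2⟩ := trek hc Q2 h2 hE2 hL2
  have heq : (Q1.length : ZMod c.length) * ε1 = (Q2.length : ZMod c.length) * ε2 := by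
    linear_combination hf2 - hf1
  have hcast : ∀ a b : ℕ, a < c.length → b < c.length →
      (a : ZMod c.length) = (b : ZMod c.length) → a = b := by
    intro a b ha hb hab
    have := congrArg ZMod.val hab
    rwa [ZMod.val_cast_of_lt ha, ZMod.val_cast_of_lt hb] at this
  have hsum : ((Q1.length + Q2.length : ℕ) : ZMod c.length) = 0 →
      Q1.length + Q2.length = c.length := by
    intro h0
    obtain ⟨k, hk⟩ := (ZMod.natCast_eq_zero_iff _ _).mp h0
    match k with
    | 0 => omega
    | 1 => omega
    | k + 2 =>
      exfalso
      have hge : c.length * 2 ≤ c.length * (k + 2) :=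
        Nat.mul_le_mul_left _ (by omega)
      omega
  rcases hε1 with rfl | rfl <;> rcases hε2 with rfl | rfl
  · left
    apply hcast _ _ hlt1 hlt2
    linear_combination heq
  · right
    apply hsum
    push_cast
    linear_combination heq
  · right
    apply hsum
    push_cast
    linear_combination -heq
  · left
    apply hcast _ _ hlt1 hlt2
    linear_combination -heq

end AuxStmt12

theorem stmt12 (G : SimpleGraph V) {r : V} (c : G.Walk r r)
    (hC : IsShortestEvenHole G c) (hgood : GoodHole G c)
    (u v : V) (hu : u ∈ c.support) (hv : v ∈ c.support)
    (h2 : 2 ≤ cycleDist G c u v) (h4 : 4 * cycleDist G c u v < c.length) :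
    G.dist u v = cycleDist G c u v := by
  classical
  have hcyc : c.IsCycle := hC.1.1.1.1
  have hind : ∀ a b : V, a ∈ c.support → b ∈ c.support → G.Adj a b → s(a, b) ∈ c.edges :=
    hC.1.1.1.2
  have hnil : ¬ c.Nil := hcyc.not_nil
  -- there exists at least one uv-path of C
  have hrt : r ∈ c.support.tail := by
    rw [← Walk.support_tail_of_not_nil c hnil]
    exact Walk.end_mem_support _
  have hvtail : v ∈ c.support.tail := by
    rcases eq_or_ne v r with rfl | hvr
    · exact hrt
    · have h := hv
      rw [Walk.support_eq_cons c] at h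
      rcases List.mem_cons.mp h with h' | h'
      · exact absurd h' hvr
      · exact h'
  have hv' : v ∈ (c.rotate u hu).support :=
    List.mem_of_mem_tail (((Walk.support_rotate c u hu).mem_iff).mpr hvtail)
  set W0 : G.Walk u v := ((c.rotate u hu).takeUntil v hv').bypass with hW0
  have hW0of : IsPathOf G c W0 := by
    refine ⟨Walk.bypass_isPath _, fun e he => ?_⟩
    exact ((Walk.rotate_edges c u hu).mem_iff).mp
      (Walk.edges_takeUntil_subset _ hv' (Walk.edges_bypass_subset _ he))
  have hSne : {n | ∃ P : G.Walk u v, IsPathOf G c P ∧ P.length = n}.Nonempty :=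
    ⟨W0.length, W0, hW0of, rfl⟩
  obtain ⟨P₀, hP₀of, hP₀len⟩ :
      ∃ P : G.Walk u v, IsPathOf G c P ∧ P.length = cycleDist G c u v :=
    Nat.sInf_mem hSne
  have hne : u ≠ v := by
    rintro rfl
    have h0 : cycleDist G c u u ≤ 0 :=
      Nat.sInf_le ⟨Walk.nil, ⟨Walk.IsPath.nil, by simp⟩, rfl⟩
    omega
  have hnadj : ¬ G.Adj u v := by
    intro hadj
    have hedge : s(u, v) ∈ c.edges := hind u v hu hv hadj
    have h1 : cycleDist G c u v ≤ 1 := by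
      refine Nat.sInf_le ⟨Walk.cons hadj Walk.nil, ⟨?_, ?_⟩, by simp⟩
      · rw [Walk.cons_isPath_iff]
        exact ⟨Walk.IsPath.nil, by simp [hne]⟩
      · intro e he
        simp only [Walk.edges_cons, Walk.edges_nil, List.mem_singleton] at he
        rw [he]
        exact hedge
    omega
  have hreach : G.Reachable u v := ⟨P₀⟩
  have hdist_le : G.dist u v ≤ cycleDist G c u v := by
    rw [← hP₀len]
    exact SimpleGraph.dist_le P₀
  refine le_antisymm hdist_le ?_
  by_contra hlt
  push_neg at hlt
  obtain ⟨W, hWlen⟩ := hreach.exists_walk_length_eq_dist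
  have hWpath : W.IsPath := W.isPath_of_length_eq_dist hWlen
  have hW2 : 2 ≤ W.length := by
    rw [hWlen]
    have h0 : G.dist u v ≠ 0 :=
      SimpleGraph.dist_ne_zero_iff_ne_and_reachable.mpr ⟨hne, hreach⟩
    have h1 : G.dist u v ≠ 1 := fun h => hnadj (SimpleGraph.dist_eq_one_iff_adj.mp h)
    omega
  have hsetup : ShortcutSetup G c W := ⟨hWpath, hne, hnadj, hu, hv⟩
  have hcut : CShortcut G c W := ⟨hW2, by rw [hWlen]; omega, by rw [hWlen]; omega⟩
  obtain ⟨Q, hQof, hSEH⟩ := hgood u v W hsetup hcut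
  obtain ⟨r', w', hw'she, hw'supp⟩ := hSEH
  have hwlen : w'.length = c.length :=
    le_antisymm (hw'she.2 r c hC.1) (hC.2 r' w' hw'she.1)
  have hw'cyc : w'.IsCycle := hw'she.1.1.1.1
  have hcardw : w'.support.toFinset.card = w'.length := cycle_support_card hw'cyc
  have hfin : w'.support.toFinset = W.support.toFinset ∪ Q.support.toFinset := by
    apply Finset.coe_injective
    rw [Finset.coe_union, List.coe_toFinset, List.coe_toFinset, List.coe_toFinset]
    exact hw'supp
  have huW : u ∈ W.support.toFinset := List.mem_toFinset.mpr (Walk.start_mem_support W)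
  have hvW : v ∈ W.support.toFinset := List.mem_toFinset.mpr (Walk.end_mem_support W)
  have huQ : u ∈ Q.support.toFinset := List.mem_toFinset.mpr (Walk.start_mem_support Q)
  have hvQ : v ∈ Q.support.toFinset := List.mem_toFinset.mpr (Walk.end_mem_support Q)
  have hsub2 : W.support.toFinset ∪ Q.support.toFinset ⊆
      W.support.toFinset ∪ ((Q.support.toFinset.erase u).erase v) := by
    intro x hx
    rcases Finset.mem_union.mp hx with h | h
    · exact Finset.mem_union_left _ h
    · by_cases hxu : x = u
      · exact Finset.mem_union_left _ (hxu ▸ huW)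
      · by_cases hxv : x = v
        · exact Finset.mem_union_left _ (hxv ▸ hvW)
        · exact Finset.mem_union_right _
            (Finset.mem_erase.mpr ⟨hxv, Finset.mem_erase.mpr ⟨hxu, h⟩⟩)
  have hcardW : W.support.toFinset.card = W.length + 1 := by
    rw [List.toFinset_card_of_nodup hWpath.support_nodup, Walk.length_support]
  have hcardQ : Q.support.toFinset.card = Q.length + 1 := by
    rw [List.toFinset_card_of_nodup hQof.1.support_nodup, Walk.length_support]
  have hveru : v ∈ Q.support.toFinset.erase u :=
    Finset.mem_erase.mpr ⟨hne.symm, hvQ⟩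
  have hcard_erase : ((Q.support.toFinset.erase u).erase v).card = Q.length - 1 := by
    rw [Finset.card_erase_of_mem hveru, Finset.card_erase_of_mem huQ, hcardQ]
    omega
  have hQL : 0 < Q.length := by
    rcases Nat.eq_zero_or_pos Q.length with h | h
    · exact absurd (Walk.eq_of_length_eq_zero h) hne
    · exact h
  have hbound : c.length ≤ W.length + Q.length := by
    have hcu : w'.support.toFinset.card ≤
        W.support.toFinset.card + ((Q.support.toFinset.erase u).erase v).card := by
      rw [hfin]
      exact le_trans (Finset.card_le_card hsub2) (Finset.card_union_le _ _)
    rw [hcardw, hwlen, hcardW, hcard_erase] at hcu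
    omega
  have hQd := two_paths hcyc hne Q P₀ hQof.1 hQof.2 hP₀of.1 hP₀of.2
  rcases hQd with h | h <;> omega
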